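/- The function G : ℝ → ℝ defined by G(x) = sgn(x)(1 − e^{−|x|}) satisfies G(−2x) + 2G(x) = G(x)² for all x > 0 and G(−2x) + 2G(x) = −G(x)² for all x < 0; in particular the constant c in the relation G(−2x) + 2G(x) = c·G(x)² takes different values (c = 1 and c = −1) on the two half-lines. -/
import Mathlib

open Real

/-- A function `G : ℝ → ℝ` satisfies the functional equation (FE) if it is
differentiable and for all `x, y, z` with `x + y + z = 0`,
`G'(x)(G(y)+G(z)) + G'(y)(G(z)+G(x)) + G'(z)(G(x)+G(y)) = 0`. -/
def FE (G : ℝ → ℝ) : Prop :=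
  Differentiable ℝ G ∧ ∀ x y z : ℝ, x + y + z = 0 →
    deriv G x * (G y + G z) + deriv G y * (G z + G x) + deriv G z * (G x + G y) = 0

theorem stmt11 :
    (∀ x : ℝ, 0 < x →
      Real.sign (-2 * x) * (1 - Real.exp (-|(-2 * x)|)) +
          2 * (Real.sign x * (1 - Real.exp (-|x|))) =
        (Real.sign x * (1 - Real.exp (-|x|))) ^ 2) ∧
    (∀ x : ℝ, x < 0 →
      Real.sign (-2 * x) * (1 - Real.exp (-|(-2 * x)|)) +
          2 * (Real.sign x * (1 - Real.exp (-|x|))) =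
        -(Real.sign x * (1 - Real.exp (-|x|))) ^ 2) := by
  constructor
  · intro x hx
    rw [Real.sign_of_neg (by linarith), Real.sign_of_pos hx,
      abs_of_nonpos (by linarith), abs_of_pos hx]
    have h : Real.exp (-(-(-2 * x))) = Real.exp (-x) ^ 2 := by
      rw [← Real.exp_nat_mul]; ring_nf
    rw [h]; ring
  · intro x hx
    rw [Real.sign_of_pos (by linarith), Real.sign_of_neg hx,
      abs_of_pos (by linarith), abs_of_neg hx]
    have h : Real.exp (-(-2 * x)) = Real.exp (-(-x)) ^ 2 := by
      rw [← Real.exp_nat_mul]; ring_nf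
    rw [h]; ring
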